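/- Let G be a finite connected graph with vertex set I ∪ {r}, where r ∉ I is a distinguished root vertex. Let A_G = {S ⊆ I : the induced subgraph of G on S ∪ {r} is connected}, and for S ∈ A_G let inc_G(S) be the number of edges of G with both endpoints in I and at least one endpoint in S. Then M_G = (A_G, inc_G) is a megagreedoid on I. -/

import Mathlib

open Finset

/-- A megagreedoid on the ground set `E`: a set system `A` of subsets of `E`
together with a rank function `r` (recorded as a total function on `Finset ι`,
whose values matter only on members of `A`). -/
structure IsMegagreedoid {ι : Type*} [DecidableEq ι] (E : Finset ι)
    (A : Set (Finset ι)) (r : Finset ι → ℝ) : Prop where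
  subset_ground : ∀ S ∈ A, S ⊆ E
  exists_erase : ∀ S ∈ A, S.Nonempty → ∃ x ∈ S, S.erase x ∈ A
  exists_insert : ∀ S ∈ A, S ≠ E → ∃ y ∈ E \ S, insert y S ∈ A
  submodular : ∀ X ∈ A, ∀ Y ∈ A, X ⊆ Y → ∀ z ∈ E \ Y,
    insert z X ∈ A → insert z Y ∈ A →
    r (insert z Y) - r Y ≤ r (insert z X) - r X

/-- The set system of the rooted-graph megagreedoid: subsets `S` of `I = V ∖ {root}`
such that the induced subgraph on `S ∪ {root}` is connected. -/
def rootedSys {V : Type*} [Fintype V] [DecidableEq V] (G : SimpleGraph V) (root : V) :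
    Set (Finset V) :=
  {S | S ⊆ Finset.univ.erase root ∧
    (SimpleGraph.induce (↑(insert root S) : Set V) G).Connected}

/-- `inc_G(S)`: the number of edges of `G` with both endpoints different from the
root and at least one endpoint in `S`. -/
noncomputable def rootedRank {V : Type*} (G : SimpleGraph V) (root : V)
    (S : Finset V) : ℝ :=
  (Nat.card {e : Sym2 V // e ∈ G.edgeSet ∧ (∀ v ∈ e, v ≠ root) ∧ ∃ v ∈ e, v ∈ S} : ℕ)

lemma induce_singleton_connected {V : Type*} (G : SimpleGraph V) (y : V) :
    (SimpleGraph.induce ({y} : Set V) G).Connected := by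
  haveI : Nonempty ({y} : Set V) := ⟨⟨y, rfl⟩⟩
  constructor
  rintro ⟨a, ha⟩ ⟨b, hb⟩
  have : (⟨a, ha⟩ : ({y} : Set V)) = ⟨b, hb⟩ := Subtype.ext (ha.trans hb.symm)
  rw [this]

lemma rootedRank_eq {V : Type*} (G : SimpleGraph V) (root : V) (S : Finset V) :
    rootedRank G root S =
      (({e : Sym2 V | e ∈ G.edgeSet ∧ (∀ v ∈ e, v ≠ root) ∧ ∃ v ∈ e, v ∈ S}).ncard : ℝ) := by
  rw [rootedRank]
  norm_cast


theorem stmt0 {V : Type*} [Fintype V] [DecidableEq V] (G : SimpleGraph V) (root : V)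
    (hG : G.Connected) :
    IsMegagreedoid (Finset.univ.erase root) (rootedSys G root) (rootedRank G root) := by
  classical
  constructor
  · -- subset_ground
    exact fun S hS => hS.1
  · -- exists_erase
    intro S hS hSne
    obtain ⟨hSsub, hconn⟩ := hS
    set s : Set V := ↑(insert root S) with hs
    have hroot : root ∈ s := by simp [hs]
    haveI : Nonempty ↥s := ⟨⟨root, hroot⟩⟩
    obtain ⟨x', hx'max⟩ :=
      Finite.exists_max (fun v : ↥s => (G.induce s).dist ⟨root, hroot⟩ v)
    obtain ⟨s₀, hs₀⟩ := hSne
    have hs₀mem : s₀ ∈ s := by simp [hs, hs₀]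
    have hs₀ne : s₀ ≠ root := (Finset.mem_erase.mp (hSsub hs₀)).1
    have hxroot : (x' : V) ≠ root := by
      intro h
      have hpos : 0 < (G.induce s).dist ⟨root, hroot⟩ ⟨s₀, hs₀mem⟩ :=
        hconn.pos_dist_of_ne (fun hh => hs₀ne (congrArg Subtype.val hh).symm)
      have h0 : x' = ⟨root, hroot⟩ := Subtype.ext h
      have := hx'max ⟨s₀, hs₀mem⟩
      rw [h0, SimpleGraph.dist_self] at this
      omega
    have hxS : (x' : V) ∈ S := by
      have h2 := x'.2
      simp [hs] at h2
      tauto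
    refine ⟨(x' : V), hxS, ?_, ?_⟩
    · exact (Finset.erase_subset _ _).trans hSsub
    · have hset : (↑(insert root (S.erase (x' : V))) : Set V) = s \ {(x' : V)} := by
        ext a
        simp only [hs, Finset.coe_insert, Finset.coe_erase, Finset.mem_coe,
          Set.mem_insert_iff, Set.mem_diff, Set.mem_singleton_iff]
        constructor
        · rintro (rfl | ⟨haS, hax⟩)
          · exact ⟨Or.inl rfl, fun h => hxroot h.symm⟩
          · exact ⟨Or.inr haS, hax⟩
        · rintro ⟨(rfl | haS), hax⟩
          · exact Or.inl rfl
          · exact Or.inr ⟨haS, hax⟩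
      rw [hset]
      have hrootmem : root ∈ s \ {(x' : V)} :=
        ⟨hroot, fun h => hxroot (Set.mem_singleton_iff.mp h).symm⟩
      apply G.induce_connected_of_patches root hrootmem
      intro v hv
      obtain ⟨hvs, hvx⟩ := hv
      obtain ⟨p, hp⟩ := hconn.exists_walk_length_eq_dist ⟨root, hroot⟩ ⟨v, hvs⟩
      have hxsup : x' ∉ p.support := by
        intro hmem
        have h1 := SimpleGraph.dist_le (p.takeUntil x' hmem)
        have h2 : 1 ≤ (p.dropUntil x' hmem).length := by
          rcases Nat.eq_zero_or_pos (p.dropUntil x' hmem).length with h | h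
          · exfalso
            apply hvx
            rw [Set.mem_singleton_iff]
            exact (congrArg Subtype.val (SimpleGraph.Walk.eq_of_length_eq_zero h)).symm
          · omega
        have h3 := congrArg SimpleGraph.Walk.length (p.take_spec hmem)
        rw [SimpleGraph.Walk.length_append] at h3
        have h4 := hx'max ⟨v, hvs⟩
        omega
      let f : G.induce s →g G := ⟨Subtype.val, fun {a b} h => h⟩
      let q : G.Walk root v := p.map f
      refine ⟨{u | u ∈ q.support}, ?_, ?_, ?_, ?_⟩
      · intro u hu
        simp only [Set.mem_setOf_eq, q, SimpleGraph.Walk.support_map] at hu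
        obtain ⟨u', hu', rfl⟩ := List.mem_map.mp hu
        exact ⟨u'.2, fun h => hxsup (Subtype.ext (Set.mem_singleton_iff.mp h).symm ▸ hu')⟩
      · exact SimpleGraph.Walk.start_mem_support q
      · exact SimpleGraph.Walk.end_mem_support q
      · exact (SimpleGraph.Walk.connected_induce_support q).preconnected _ _
  · -- exists_insert
    intro S hS hne
    obtain ⟨hSsub, hconn⟩ := hS
    set s : Set V := ↑(insert root S) with hs
    have hroot : root ∈ s := by simp [hs]
    obtain ⟨w, hwmem, hwS⟩ := Finset.exists_of_ssubset (hSsub.ssubset_of_ne hne)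
    have hwroot : w ≠ root := (Finset.mem_erase.mp hwmem).1
    have hws : w ∉ s := by simp [hs, hwroot, hwS]
    obtain ⟨p⟩ := hG.preconnected root w
    obtain ⟨d, _, hdfst, hdsnd⟩ := p.exists_boundary_dart s hroot hws
    have hyroot : d.snd ≠ root := fun h => hdsnd (h ▸ hroot)
    have hyS : d.snd ∉ S := fun h => hdsnd (by simp [hs, h])
    refine ⟨d.snd, ?_, ?_, ?_⟩
    · exact Finset.mem_sdiff.mpr ⟨Finset.mem_erase.mpr ⟨hyroot, Finset.mem_univ _⟩, hyS⟩
    · exact Finset.insert_subset (Finset.mem_erase.mpr ⟨hyroot, Finset.mem_univ _⟩) hSsub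
    · have hset : (↑(insert root (insert d.snd S)) : Set V) = s ∪ {d.snd} := by
        ext a
        simp only [hs, Finset.coe_insert, Set.mem_insert_iff, Set.mem_union,
          Finset.mem_coe, Set.mem_singleton_iff]
        tauto
      rw [hset]
      exact SimpleGraph.connected_induce_union hconn.preconnected
        (induce_singleton_connected G d.snd).preconnected hdfst rfl d.adj
  · -- submodular
    intro X _ Y _ hXY z hz _ _
    set fS : Finset V → Set (Sym2 V) :=
      fun T => {e | e ∈ G.edgeSet ∧ (∀ v ∈ e, v ≠ root) ∧ ∃ v ∈ e, v ∈ T} with hfS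
    have hfin : ∀ T, (fS T).Finite := fun T => Set.toFinite _
    have hsub : ∀ (T : Finset V) (w : V), fS T ⊆ fS (insert w T) := by
      rintro T w e ⟨he, hr, v, hv, hvT⟩
      exact ⟨he, hr, v, hv, Finset.mem_insert_of_mem hvT⟩
    have key : ∀ T : Finset V, ∀ w : V,
        rootedRank G root (insert w T) - rootedRank G root T
          = ((fS (insert w T) \ fS T).ncard : ℝ) := by
      intro T w
      rw [rootedRank_eq, rootedRank_eq,
        Set.ncard_diff (hsub T w) (hfin T),
        Nat.cast_sub (Set.ncard_le_ncard (hsub T w) (hfin _))]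
    rw [key, key]
    have hD : fS (insert z Y) \ fS Y ⊆ fS (insert z X) \ fS X := by
      rintro e ⟨⟨he, hr, v, hv, hvY⟩, hne⟩
      have hvz : v = z := by
        rcases Finset.mem_insert.mp hvY with h | h
        · exact h
        · exact absurd (⟨he, hr, v, hv, h⟩ : e ∈ fS Y) hne
      refine ⟨⟨he, hr, v, hv, hvz ▸ Finset.mem_insert_self z X⟩, ?_⟩
      rintro ⟨_, _, u, hu, huX⟩
      exact hne ⟨he, hr, u, hu, hXY huX⟩
    exact_mod_cast Set.ncard_le_ncard hD ((hfin _).diff)
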